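/- For all 1 ≤ j ≤ n−1, the operator τ_j on linear extensions of a finite poset P of size n can be expressed as a product of extended promotion operators; specifically τ_j = ∂_j τ_{n-1} ⋯ τ_{j+2} τ_{j+1}, and by downward induction on j each τ_k appearing is itself a product of promotion operators. -/

import Mathlib

open scoped Classical

/-- A partial order on `Fin n`, given as a plain structure (so that the standard
linear order on `Fin n` is unaffected). -/
structure FinPoset (n : ℕ) where
  le : Fin n → Fin n → Prop
  le_refl : ∀ a, le a a
  le_trans : ∀ a b c, le a b → le b c → le a c
  le_antisymm : ∀ a b, le a b → le b a → a = b

/-- The strict order associated to a `FinPoset`. -/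
def FinPoset.lt {n : ℕ} (P : FinPoset n) (a b : Fin n) : Prop :=
  P.le a b ∧ a ≠ b

variable {n : ℕ}

/-- `tauOp P i π` is the operator `τ_i` (0-indexed) acting on the permutation `π`
(in one-line notation `π k` is the entry at position `k`): it swaps the entries at
positions `i` and `i+1` if they are incomparable in `P`, else fixes `π`. -/
noncomputable def tauOp (P : FinPoset n) (i : ℕ) (π : Equiv.Perm (Fin n)) :
    Equiv.Perm (Fin n) :=
  if h : i + 1 < n then
    if ¬ P.le (π ⟨i, Nat.lt_of_succ_lt h⟩) (π ⟨i + 1, h⟩) ∧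
        ¬ P.le (π ⟨i + 1, h⟩) (π ⟨i, Nat.lt_of_succ_lt h⟩) then
      π * Equiv.swap ⟨i, Nat.lt_of_succ_lt h⟩ ⟨i + 1, h⟩
    else π
  else π

/-- `π` is a linear extension of the poset `P` on `Fin n`: if `a ≺ b` in `P`
then the position of `a` precedes the position of `b`. -/
def IsLinearExtension (P : FinPoset n) (π : Equiv.Perm (Fin n)) : Prop :=
  ∀ a b : Fin n, P.lt a b → π.symm a < π.symm b

/-- The extended promotion operator `∂_j = τ_j τ_{j+1} ⋯ τ_{n-2}` (0-indexed),
applied on the right to `π`. -/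
noncomputable def promoOp (P : FinPoset n) (j : ℕ) (π : Equiv.Perm (Fin n)) :
    Equiv.Perm (Fin n) :=
  (List.range (n - 1 - j)).foldl (fun σ k => tauOp P (j + k) σ) π

namespace TauHelper

/-- Apply a list of `τ` operators from left to right. -/
noncomputable def app (P : FinPoset n) (L : List ℕ) (π : Equiv.Perm (Fin n)) :
    Equiv.Perm (Fin n) := L.foldl (fun σ k => tauOp P k σ) π

lemma app_nil (P : FinPoset n) (π : Equiv.Perm (Fin n)) : app P [] π = π := rfl

lemma app_cons (P : FinPoset n) (a : ℕ) (L : List ℕ) (π : Equiv.Perm (Fin n)) :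
    app P (a :: L) π = app P L (tauOp P a π) := rfl

lemma app_append (P : FinPoset n) (L₁ L₂ : List ℕ) (π : Equiv.Perm (Fin n)) :
    app P (L₁ ++ L₂) π = app P L₂ (app P L₁ π) := by
  simp [app, List.foldl_append]

lemma tau_invol (P : FinPoset n) (i : ℕ) (π : Equiv.Perm (Fin n)) :
    tauOp P i (tauOp P i π) = π := by
  unfold tauOp
  by_cases h : i + 1 < n
  · simp only [dif_pos h]
    set a : Fin n := ⟨i, Nat.lt_of_succ_lt h⟩ with ha
    set b : Fin n := ⟨i + 1, h⟩ with hb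
    by_cases hc : ¬ P.le (π a) (π b) ∧ ¬ P.le (π b) (π a)
    · rw [if_pos hc]
      have h1 : (π * Equiv.swap a b) a = π b := by
        simp [Equiv.Perm.mul_apply, Equiv.swap_apply_left]
      have h2 : (π * Equiv.swap a b) b = π a := by
        simp [Equiv.Perm.mul_apply, Equiv.swap_apply_right]
      rw [h1, h2, if_pos ⟨hc.2, hc.1⟩, mul_assoc, Equiv.swap_mul_self, mul_one]
    · rw [if_neg hc, if_neg hc]
  · simp only [dif_neg h]

lemma app_reverse_app (P : FinPoset n) :
    ∀ (L : List ℕ) (π : Equiv.Perm (Fin n)), app P L.reverse (app P L π) = π := by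
  intro L
  induction L with
  | nil => intro π; rfl
  | cons a L ih =>
      intro π
      rw [app_cons, List.reverse_cons, app_append, ih]
      show tauOp P a (tauOp P a π) = π
      exact tau_invol P a π

lemma promo_as_app (P : FinPoset n) (j : ℕ) (π : Equiv.Perm (Fin n)) :
    promoOp P j π = app P ((List.range (n - 1 - j)).map (fun k => j + k)) π := by
  simp [promoOp, app, List.foldl_map]

lemma range_map_add (j m : ℕ) :
    (List.range (m + 1)).map (fun k => j + k)
      = j :: (List.range m).map (fun k => j + 1 + k) := by
  rw [List.range_succ_eq_map, List.map_cons, List.map_map]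
  have hfun : ((fun k => j + k) ∘ Nat.succ) = (fun k => j + 1 + k) := by
    funext k
    simp only [Function.comp]
    omega
  rw [hfun]
  simp

lemma rev_eq (j : ℕ) (hj : j + 2 ≤ n) :
    ((List.range (n - 2 - j)).map (fun k => j + 1 + k)).reverse
      = (List.range (n - 2 - j)).map (fun k => n - 2 - k) := by
  apply List.ext_getElem
  · simp
  · intro i h1 h2
    simp only [List.getElem_reverse, List.getElem_map, List.getElem_range,
      List.length_reverse, List.length_map, List.length_range]
    have hi : i < n - 2 - j := by simpa using h2
    omega

/-- Key identity: `τ_j = ∂_j τ_{n-2} ⋯ τ_{j+1}`, for every permutation. -/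
lemma key (P : FinPoset n) (j : ℕ) (hj : j + 2 ≤ n) (π : Equiv.Perm (Fin n)) :
    tauOp P j π =
      (List.range (n - 2 - j)).foldl (fun σ k => tauOp P (n - 2 - k) σ) (promoOp P j π) := by
  have hfold : (List.range (n - 2 - j)).foldl (fun σ k => tauOp P (n - 2 - k) σ)
        (promoOp P j π)
      = app P ((List.range (n - 2 - j)).map (fun k => n - 2 - k)) (promoOp P j π) := by
    simp [app, List.foldl_map]
  rw [hfold, promo_as_app, ← rev_eq j hj]
  have hm : n - 1 - j = (n - 2 - j) + 1 := by omega
  rw [hm, range_map_add, app_cons, app_reverse_app]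

lemma app_exists (P : FinPoset n) :
    ∀ L : List ℕ,
      (∀ k ∈ L, ∃ l : List ℕ, ∀ π : Equiv.Perm (Fin n),
        tauOp P k π = l.foldl (fun σ k => promoOp P k σ) π) →
      ∃ l : List ℕ, ∀ π : Equiv.Perm (Fin n),
        app P L π = l.foldl (fun σ k => promoOp P k σ) π := by
  intro L
  induction L with
  | nil => intro _; exact ⟨[], fun π => rfl⟩
  | cons a L ih =>
      intro h
      obtain ⟨la, hla⟩ := h a List.mem_cons_self
      obtain ⟨lL, hlL⟩ := ih (fun k hk => h k (List.mem_cons_of_mem a hk))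
      refine ⟨la ++ lL, fun π => ?_⟩
      rw [app_cons, hlL, hla, List.foldl_append]

lemma exists_list (P : FinPoset n) :
    ∀ d j, n - 2 - j = d → j + 2 ≤ n →
      ∃ l : List ℕ, ∀ π : Equiv.Perm (Fin n),
        tauOp P j π = l.foldl (fun σ k => promoOp P k σ) π := by
  intro d
  induction d using Nat.strong_induction_on with
  | _ d ih =>
      intro j hd hj
      have hmem : ∀ k ∈ (List.range (n - 2 - j)).map (fun k => n - 2 - k),
          ∃ l : List ℕ, ∀ π : Equiv.Perm (Fin n),
            tauOp P k π = l.foldl (fun σ k => promoOp P k σ) π := by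
        intro k hk
        simp only [List.mem_map, List.mem_range] at hk
        obtain ⟨i, hi, rfl⟩ := hk
        exact ih i (by omega) (n - 2 - i) (by omega) (by omega)
      obtain ⟨lL, hlL⟩ := app_exists P _ hmem
      refine ⟨j :: lL, fun π => ?_⟩
      have hfold : (List.range (n - 2 - j)).foldl (fun σ k => tauOp P (n - 2 - k) σ)
            (promoOp P j π)
          = app P ((List.range (n - 2 - j)).map (fun k => n - 2 - k)) (promoOp P j π) := by
        simp [app, List.foldl_map]
      rw [key P j hj π, hfold, hlL]
      rfl

end TauHelper

/-- For `1 ≤ j ≤ n-1` (0-indexed: `j + 2 ≤ n`), `τ_j` can be expressed via promotion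
operators: `τ_j = ∂_j τ_{n-1} ⋯ τ_{j+2} τ_{j+1}` (0-indexed: `∂_j τ_{n-2} ⋯ τ_{j+1}`),
and, by downward induction, `τ_j` is a product of promotion operators. -/
theorem tau_as_product_of_promotions (P : FinPoset n) (j : ℕ) (hj : j + 2 ≤ n) :
    (∀ π : Equiv.Perm (Fin n), IsLinearExtension P π →
      tauOp P j π =
        (List.range (n - 2 - j)).foldl (fun σ k => tauOp P (n - 2 - k) σ) (promoOp P j π)) ∧
    (∃ l : List ℕ, ∀ π : Equiv.Perm (Fin n), IsLinearExtension P π →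
      tauOp P j π = l.foldl (fun σ k => promoOp P k σ) π) := by
  constructor
  · exact fun π _ => TauHelper.key P j hj π
  · obtain ⟨l, hl⟩ := TauHelper.exists_list P (n - 2 - j) j rfl hj
    exact ⟨l, fun π _ => hl π⟩
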